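/- Assume that for some x₀ ∈ ℝ and some γ ∈ {−1, 1} one has ∏_{i=0}^{N−1} B̂^i(x₀) = γ·Id. Then w_N′(x₀) = (α_{N−1}/α₀)·(w_{N−2}^{[1]})′(x₀), and moreover the strict inequality w_{N−1}′(x₀)·(w_{N−1}^{[1]})′(x₀) > w_N′(x₀)·(w_{N−2}^{[1]})′(x₀) holds. -/

import Mathlib

/-- The product `C (n₀ + len - 1) * ⋯ * C n₀` of matrices, with larger indices on the left;
equal to the identity when `len = 0`. -/
def prodDesc (C : ℤ → Matrix (Fin 2) (Fin 2) ℝ) (n₀ : ℤ) : ℕ → Matrix (Fin 2) (Fin 2) ℝ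
  | 0 => 1
  | len + 1 => C (n₀ + len) * prodDesc C n₀ len

/-- The transfer matrix `B̂^j(x)` associated with the sequences `α`, `β`. -/
noncomputable def transferMatrix (α β : ℤ → ℝ) (j : ℤ) (x : ℝ) : Matrix (Fin 2) (Fin 2) ℝ :=
  !![0, 1; -(α (j - 1) / α j), (x - β j) / α j]

/-- The "second kind" solution sequence. -/
def seqV (c : ℝ) (b : ℕ → ℝ) : ℕ → ℝ
  | 0 => 0
  | n + 1 => -c * b n

@[simp] lemma seqV_zero (c : ℝ) (b : ℕ → ℝ) : seqV c b 0 = 0 := rfl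
@[simp] lemma seqV_succ (c : ℝ) (b : ℕ → ℝ) (n : ℕ) : seqV c b (n+1) = -c * b n := rfl

/-- Christoffel–Darboux style telescoping. -/
lemma telescope_aux (x₀ : ℝ) (A B p p' q : ℕ → ℝ)
    (hp' : ∀ n, A n * p' n + B (n+1) * p' (n+1) + A (n+1) * p' (n+2)
        = p (n+1) + x₀ * p' (n+1))
    (hq : ∀ n, A n * q n + B (n+1) * q (n+1) + A (n+1) * q (n+2) = x₀ * q (n+1))
    (hbase : p 0 * q 0 = A 0 * (p' 1 * q 0 - p' 0 * q 1)) :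
    ∀ n, ∑ k ∈ Finset.range (n+1), p k * q k
      = A n * (p' (n+1) * q n - p' n * q (n+1)) := by
  intro n
  induction n with
  | zero => simpa using hbase
  | succ n ih =>
    rw [Finset.sum_range_succ, ih]
    linear_combination p' (n+1) * hq n - q (n+1) * hp' n

/-- Differentiability and the derivative recurrence for orthonormal-polynomial families. -/
lemma ortho_aux (A B : ℕ → ℝ) (hA : ∀ n, A n ≠ 0) (f : ℕ → ℝ → ℝ)
    (h0 : ∀ x, f 0 x = 1) (h1 : ∀ x, f 1 x = (x - B 0) / A 0)
    (hrec : ∀ n x, A n * f n x + B (n+1) * f (n+1) x + A (n+1) * f (n+2) x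
        = x * f (n+1) x) :
    (∀ x, deriv (f 0) x = 0) ∧ (∀ x, deriv (f 1) x = 1 / A 0) ∧
    (∀ n x, A n * deriv (f n) x + B (n+1) * deriv (f (n+1)) x
        + A (n+1) * deriv (f (n+2)) x = f (n+1) x + x * deriv (f (n+1)) x) := by
  have hf0 : f 0 = fun _ => 1 := funext h0
  have hf1 : f 1 = fun x => (x - B 0) / A 0 := funext h1
  have hstep : ∀ n, f (n+2) = fun x => ((x - B (n+1)) * f (n+1) x - A n * f n x) / A (n+1) := by
    intro n; funext x
    rw [eq_div_iff (hA (n+1))]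
    linear_combination hrec n x
  have hdiff : ∀ n, Differentiable ℝ (f n) := by
    have key : ∀ n, Differentiable ℝ (f n) ∧ Differentiable ℝ (f (n+1)) := by
      intro n
      induction n with
      | zero =>
        constructor
        · rw [hf0]; exact differentiable_const 1
        · rw [hf1]; exact (differentiable_id.sub_const _).div_const _
      | succ n ih =>
        refine ⟨ih.2, ?_⟩
        rw [hstep n]
        exact (((differentiable_id.sub_const _).mul ih.2).sub (ih.1.const_mul _)).div_const _
    exact fun n => (key n).1
  refine ⟨?_, ?_, ?_⟩
  · intro x; rw [hf0]; simp
  · intro x; rw [hf1]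
    exact (((hasDerivAt_id x).sub_const _).div_const _).deriv
  · intro n x
    have h1' : HasDerivAt (f (n+1)) (deriv (f (n+1)) x) x :=
      ((hdiff (n+1)) x).hasDerivAt
    have h0' : HasDerivAt (f n) (deriv (f n) x) x := ((hdiff n) x).hasDerivAt
    have h2 : HasDerivAt (f (n+2))
        ((1 * f (n+1) x + (x - B (n+1)) * deriv (f (n+1)) x - A n * deriv (f n) x) / A (n+1)) x := by
      rw [hstep n]
      exact ((((hasDerivAt_id x).sub_const _).mul h1').sub (h0'.const_mul _)).div_const _
    rw [h2.deriv, mul_comm (A (n+1)), div_mul_cancel₀ _ (hA (n+1))]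
    ring

set_option maxHeartbeats 1000000 in
theorem stmt6 (N : ℕ) (hN : 2 ≤ N)
    (α β : ℤ → ℝ) (hαpos : ∀ j, 0 < α j)
    (hαper : ∀ j, α (j + N) = α j) (hβper : ∀ j, β (j + N) = β j)
    -- `W k n` is the orthonormal polynomial `w_n^{[k]}` associated with the shifted sequences
    (W : ℕ → ℕ → ℝ → ℝ)
    (hW0 : ∀ (k : ℕ) (x : ℝ), W k 0 x = 1)
    (hW1 : ∀ (k : ℕ) (x : ℝ), W k 1 x = (x - β k) / α k)
    (hWrec : ∀ k : ℕ, ∀ n : ℕ, 1 ≤ n → ∀ x : ℝ,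
      α ((n : ℤ) + k - 1) * W k (n - 1) x + β ((n : ℤ) + k) * W k n x
        + α ((n : ℤ) + k) * W k (n + 1) x = x * W k n x)
    (x₀ : ℝ) (γ : ℝ) (hγ : γ = -1 ∨ γ = 1)
    (hF : prodDesc (fun j => transferMatrix α β j x₀) 0 N
      = γ • (1 : Matrix (Fin 2) (Fin 2) ℝ)) :
    deriv (W 0 N) x₀ = (α ((N : ℤ) - 1) / α 0) * deriv (W 1 (N - 2)) x₀ ∧
    deriv (W 0 (N - 1)) x₀ * deriv (W 1 (N - 1)) x₀
      > deriv (W 0 N) x₀ * deriv (W 1 (N - 2)) x₀ := by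
  obtain ⟨m, rfl⟩ : ∃ m, N = m + 2 := ⟨N - 2, by omega⟩
  have hγ2 : γ * γ = 1 := by rcases hγ with h | h <;> rw [h] <;> norm_num
  have hγ0 : γ ≠ 0 := by rcases hγ with h | h <;> rw [h] <;> norm_num
  -- the two families of orthonormal polynomials, with ℕ-indexed coefficients
  set A0 : ℕ → ℝ := fun n => α n with hA0_def
  set B0 : ℕ → ℝ := fun n => β n with hB0_def
  set A1 : ℕ → ℝ := fun n => α (n+1 : ℕ) with hA1_def
  set B1 : ℕ → ℝ := fun n => β (n+1 : ℕ) with hB1_def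
  have hA0pos : ∀ n, 0 < A0 n := fun n => hαpos _
  have hA1pos : ∀ n, 0 < A1 n := fun n => hαpos _
  have hrec0 : ∀ n x, A0 n * W 0 n x + B0 (n+1) * W 0 (n+1) x + A0 (n+1) * W 0 (n+2) x
      = x * W 0 (n+1) x := by
    intro n x
    have h := hWrec 0 (n+1) (by omega) x
    rw [show ((n+1 : ℕ) : ℤ) + ((0:ℕ) : ℤ) - 1 = ((n : ℕ) : ℤ) by push_cast; ring,
        show ((n+1 : ℕ) : ℤ) + ((0:ℕ) : ℤ) = ((n+1 : ℕ) : ℤ) by push_cast; ring,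
        Nat.add_sub_cancel] at h
    exact h
  have hrec1 : ∀ n x, A1 n * W 1 n x + B1 (n+1) * W 1 (n+1) x + A1 (n+1) * W 1 (n+2) x
      = x * W 1 (n+1) x := by
    intro n x
    have h := hWrec 1 (n+1) (by omega) x
    rw [show ((n+1 : ℕ) : ℤ) + ((1:ℕ) : ℤ) - 1 = ((n+1 : ℕ) : ℤ) by push_cast; ring,
        show ((n+1 : ℕ) : ℤ) + ((1:ℕ) : ℤ) = ((n+2 : ℕ) : ℤ) by push_cast; ring,
        Nat.add_sub_cancel] at h
    exact h
  obtain ⟨hd0, hd1, hdrec0⟩ := ortho_aux A0 B0 (fun n => (hA0pos n).ne') (W 0)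
    (hW0 0) (fun x => by simpa [hB0_def, hA0_def] using hW1 0 x) hrec0
  obtain ⟨he0, he1, hdrec1⟩ := ortho_aux A1 B1 (fun n => (hA1pos n).ne') (W 1)
    (hW0 1) (fun x => by simpa [hB1_def, hA1_def] using hW1 1 x) hrec1
  -- values and derivatives at x₀
  set a : ℕ → ℝ := fun n => W 0 n x₀ with ha_def
  set b : ℕ → ℝ := fun n => W 1 n x₀ with hb_def
  set d : ℕ → ℝ := fun n => deriv (W 0 n) x₀ with hd_def
  set e : ℕ → ℝ := fun n => deriv (W 1 n) x₀ with he_def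
  set c : ℝ := α (-1) / α 0 with hc_def
  have hα0pos : (0:ℝ) < α 0 := hαpos 0
  have hcpos : 0 < c := div_pos (hαpos _) (hαpos _)
  set u : ℕ → ℝ := seqV c b with hu_def
  set u' : ℕ → ℝ := seqV c e with hu'_def
  have ha0 : a 0 = 1 := hW0 0 x₀
  have hb0 : b 0 = 1 := hW0 1 x₀
  have hd0' : d 0 = 0 := hd0 x₀
  have he0' : e 0 = 0 := he0 x₀
  have hd1' : d 1 = 1 / A0 0 := hd1 x₀
  have he1' : e 1 = 1 / A1 0 := he1 x₀
  -- value recurrences at x₀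
  have ha_rec : ∀ n, A0 n * a n + B0 (n+1) * a (n+1) + A0 (n+1) * a (n+2) = x₀ * a (n+1) :=
    fun n => hrec0 n x₀
  have hb_rec : ∀ n, A1 n * b n + B1 (n+1) * b (n+1) + A1 (n+1) * b (n+2) = x₀ * b (n+1) :=
    fun n => hrec1 n x₀
  have hd_rec : ∀ n, A0 n * d n + B0 (n+1) * d (n+1) + A0 (n+1) * d (n+2)
      = a (n+1) + x₀ * d (n+1) := fun n => hdrec0 n x₀
  have he_rec : ∀ n, A1 n * e n + B1 (n+1) * e (n+1) + A1 (n+1) * e (n+2)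
      = b (n+1) + x₀ * e (n+1) := fun n => hdrec1 n x₀
  -- the u recurrences (for the k = 0 family of coefficients)
  have hu_rec : ∀ n, A0 n * u n + B0 (n+1) * u (n+1) + A0 (n+1) * u (n+2) = x₀ * u (n+1) := by
    intro n
    match n with
    | 0 =>
      have h1 : b 1 = (x₀ - B1 0) / A1 0 := by
        simpa [hB1_def, hA1_def] using hW1 1 x₀
      have hA1ne := (hA1pos 0).ne'
      have hB0A : B0 1 = B1 0 := by simp [hB0_def, hB1_def]
      have hA0A : A0 1 = A1 0 := by simp [hA0_def, hA1_def]
      simp only [seqV_zero, seqV_succ, hu_def, hb0, hB0A, hA0A, h1]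
      field_simp
      ring
    | Nat.succ j =>
      have h := hrec1 j x₀
      have hA0A : ∀ i : ℕ, A0 (i+1) = A1 i := by intro i; simp [hA0_def, hA1_def]
      have hB0A : ∀ i : ℕ, B0 (i+1) = B1 i := by intro i; simp [hB0_def, hB1_def]
      simp only [hu_def, seqV_succ, hA0A, hB0A]
      linear_combination (-c) * h
  have hu'_rec : ∀ n, A0 n * u' n + B0 (n+1) * u' (n+1) + A0 (n+1) * u' (n+2)
      = u (n+1) + x₀ * u' (n+1) := by
    intro n
    match n with
    | 0 =>
      have hA1ne := (hA1pos 0).ne'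
      have hA0A : A0 1 = A1 0 := by simp [hA0_def, hA1_def]
      simp only [seqV_zero, seqV_succ, hu_def, hu'_def, he0', hb0, he1', hA0A]
      field_simp
      ring
    | Nat.succ j =>
      have h := hdrec1 j x₀
      have hA0A : ∀ i : ℕ, A0 (i+1) = A1 i := by intro i; simp [hA0_def, hA1_def]
      have hB0A : ∀ i : ℕ, B0 (i+1) = B1 i := by intro i; simp [hB0_def, hB1_def]
      simp only [hu_def, hu'_def, seqV_succ, hA0A, hB0A]
      linear_combination (-c) * h
  -- the matrix product formula
  have hT : ∀ k : ℕ, prodDesc (fun j => transferMatrix α β j x₀) 0 (k+1)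
      = !![u k, a k; u (k+1), a (k+1)] := by
    intro k
    induction k with
    | zero =>
      show transferMatrix α β (0 + (0:ℕ)) x₀ * prodDesc _ 0 0 = _
      have ha1 : a 1 = (x₀ - β 0) / α 0 := by simpa using hW1 0 x₀
      ext i j
      fin_cases i <;> fin_cases j <;>
        simp [prodDesc, transferMatrix, ha0, ha1, hb0, hu_def, hc_def]
    | succ k ih =>
      show transferMatrix α β (0 + ((k+1:ℕ) : ℤ)) x₀ * prodDesc _ 0 (k+1) = _
      rw [ih]
      have hαk1 := (hαpos ((k:ℤ)+1)).ne'
      have hval_u := hu_rec k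
      have hval_a := ha_rec k
      simp only [hA0_def, hB0_def] at hval_u hval_a
      have hidx : (0 : ℤ) + ((k+1:ℕ) : ℤ) = (k : ℤ) + 1 := by push_cast; ring
      have hidx2 : ((k : ℤ) + 1) - 1 = (k : ℤ) := by ring
      push_cast at hval_u hval_a
      ext i j
      fin_cases i <;> fin_cases j <;>
        simp [transferMatrix, Matrix.mul_apply, Fin.sum_univ_two, hidx, hidx2]
      · -- entry (1,0): u (k+2)
        field_simp
        linear_combination (-1) * hval_u
      · -- entry (1,1): a (k+2)
        field_simp
        linear_combination (-1) * hval_a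
  -- extract the entries at N = m + 2
  have hFm : (!![u (m+1), a (m+1); u (m+2), a (m+2)] : Matrix (Fin 2) (Fin 2) ℝ)
      = γ • 1 := (hT (m+1)).symm.trans hF
  have h11 : u (m+1) = γ := by
    have h := congrFun (congrFun hFm 0) 0; simpa [Matrix.one_apply] using h
  have h12 : a (m+1) = 0 := by
    have h := congrFun (congrFun hFm 0) 1; simpa [Matrix.one_apply] using h
  have h21 : u (m+2) = 0 := by
    have h := congrFun (congrFun hFm 1) 0; simpa [Matrix.one_apply] using h
  have h22 : a (m+2) = γ := by
    have h := congrFun (congrFun hFm 1) 1; simpa [Matrix.one_apply] using h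
  have hbm1 : b (m+1) = 0 := by
    have : -c * b (m+1) = 0 := h21
    rcases mul_eq_zero.mp this with h | h
    · exact absurd h (by simpa using hcpos.ne')
    · exact h
  have hbm : b m = -γ / c := by
    have : -c * b m = γ := h11
    field_simp
    linarith [this]
  -- telescoping sums
  set S : ℝ := ∑ k ∈ Finset.range (m+2), a k * a k with hS_def
  set S1 : ℝ := ∑ k ∈ Finset.range (m+1), b k * b k with hS1_def
  set M : ℝ := ∑ k ∈ Finset.range (m+2), a k * u k with hM_def
  have base_aa : a 0 * a 0 = A0 0 * (d 1 * a 0 - d 0 * a 1) := by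
    rw [ha0, hd0', hd1']
    field_simp [(hA0pos 0).ne']
    ring
  have base_bb : b 0 * b 0 = A1 0 * (e 1 * b 0 - e 0 * b 1) := by
    rw [hb0, he0', he1']
    field_simp [(hA1pos 0).ne']
    ring
  have base_au : a 0 * u 0 = A0 0 * (d 1 * u 0 - d 0 * u 1) := by
    simp [hu_def, hd0']
  have base_ua : u 0 * a 0 = A0 0 * (u' 1 * a 0 - u' 0 * a 1) := by
    simp [hu_def, hu'_def, he0']
  have T_aa : S = A0 (m+1) * (d (m+2) * a (m+1) - d (m+1) * a (m+2)) := by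
    rw [hS_def]; exact telescope_aux x₀ A0 B0 a d a hd_rec ha_rec base_aa (m+1)
  have T_bb : S1 = A1 m * (e (m+1) * b m - e m * b (m+1)) := by
    rw [hS1_def]; exact telescope_aux x₀ A1 B1 b e b he_rec hb_rec base_bb m
  have T_au : M = A0 (m+1) * (d (m+2) * u (m+1) - d (m+1) * u (m+2)) := by
    rw [hM_def]; exact telescope_aux x₀ A0 B0 a d u hd_rec hu_rec base_au (m+1)
  have T_ua : ∑ k ∈ Finset.range (m+2), u k * a k
      = A0 (m+1) * (u' (m+2) * a (m+1) - u' (m+1) * a (m+2)) :=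
    telescope_aux x₀ A0 B0 u u' a hu'_rec ha_rec base_ua (m+1)
  -- simplify using the boundary values
  rw [h12, h22] at T_aa T_ua
  rw [h11, h21] at T_au
  rw [hbm, hbm1] at T_bb
  -- key scalar facts
  have hX : (0:ℝ) < A0 (m+1) := hA0pos _
  have hXA : A0 (m+1) = A1 m := rfl
  have hu'm1 : u' (m+2) = -c * e (m+1) := rfl
  have hu'm : u' (m+1) = -c * e m := rfl
  -- T_aa : S = A0 (m+1) * (d (m+2) * 0 - d (m+1) * γ)
  -- T_au : M = A0 (m+1) * (d (m+2) * γ - d (m+1) * 0)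
  -- T_ua : ∑ u k * a k = A0 (m+1) * (u' (m+2) * 0 - u' (m+1) * γ)
  have hMua : M = A0 (m+1) * (c * e m * γ) := by
    rw [hM_def]
    have : ∑ k ∈ Finset.range (m+2), a k * u k = ∑ k ∈ Finset.range (m+2), u k * a k :=
      Finset.sum_congr rfl fun i _ => mul_comm _ _
    rw [this, T_ua, hu'm]
    ring
  have hMau : M = A0 (m+1) * (d (m+2) * γ) := by rw [T_au]; ring
  have hSd : S = -(A0 (m+1) * (d (m+1) * γ)) := by rw [T_aa]; ring
  have hS1e : S1 = -(A1 m * (e (m+1) * γ)) / c := by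
    rw [T_bb]; field_simp
    ring
  -- Goal 1
  have hper : α ((m:ℤ)+1) = α (-1) := by
    have h := hαper (-1)
    rw [show (-1 : ℤ) + ((m+2:ℕ) : ℤ) = (m:ℤ)+1 by push_cast; ring] at h
    exact h
  have hceq : c = A0 (m+1) / α 0 := by
    have hx : A0 (m+1) = α (-1) := by
      show α (((m+1:ℕ)) : ℤ) = α (-1)
      rw [show (((m+1:ℕ)) : ℤ) = (m:ℤ)+1 by push_cast; ring]
      exact hper
    rw [hx, hc_def]
  have goal1 : d (m+2) = c * e m := by
    have h := hMau.symm.trans hMua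
    have hne : A0 (m+1) * γ ≠ 0 := mul_ne_zero hX.ne' hγ0
    have h2 : (A0 (m+1) * γ) * d (m+2) = (A0 (m+1) * γ) * (c * e m) := by
      linear_combination h
    exact mul_left_cancel₀ hne h2
  -- Cauchy–Schwarz part
  have hM_split : M = ∑ i ∈ Finset.range m, a (i+1) * (-c * b i) := by
    rw [hM_def, Finset.sum_range_succ, Finset.sum_range_succ', h12]
    simp [hu_def]
  have hCS := Finset.sum_mul_sq_le_sq_mul_sq (Finset.range m)
    (fun i => a (i+1)) (fun i => -c * b i)
  have hP : ∑ i ∈ Finset.range m, a (i+1) ^ 2 = S - 1 := by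
    have : S = (∑ i ∈ Finset.range m, a (i+1) * a (i+1)) + a 0 * a 0
        + a (m+1) * a (m+1) := by
      rw [hS_def, Finset.sum_range_succ, Finset.sum_range_succ']
    rw [this, ha0, h12]
    have : ∑ i ∈ Finset.range m, a (i+1) ^ 2
        = ∑ i ∈ Finset.range m, a (i+1) * a (i+1) :=
      Finset.sum_congr rfl fun i _ => sq (a (i+1)) ▸ by ring
    rw [this]; ring
  have hQ : ∑ i ∈ Finset.range m, (-c * b i) ^ 2 = c^2 * S1 - 1 := by
    have h1 : S1 = (∑ i ∈ Finset.range m, b i * b i) + b m * b m := by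
      rw [hS1_def, Finset.sum_range_succ]
    have h2 : b m * b m = 1 / c^2 := by
      rw [hbm, div_mul_div_comm, neg_mul_neg, hγ2, ← pow_two]
    have h3 : ∑ i ∈ Finset.range m, (-c * b i) ^ 2
        = c^2 * ∑ i ∈ Finset.range m, b i * b i := by
      rw [Finset.mul_sum]
      exact Finset.sum_congr rfl fun i _ => by ring
    rw [h3]
    rw [h1, h2]
    field_simp
    ring
  have hSge : 1 ≤ S := by
    have h := Finset.single_le_sum (f := fun k => a k * a k)
      (fun i _ => mul_self_nonneg _) (Finset.mem_range.mpr (by omega : 0 < m+2))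
    rw [hS_def]; simpa [ha0] using h
  have hS1ge : 1 ≤ S1 := by
    have h := Finset.single_le_sum (f := fun k => b k * b k)
      (fun i _ => mul_self_nonneg _) (Finset.mem_range.mpr (by omega : 0 < m+1))
    rw [hS1_def]; simpa [hb0] using h
  have hQnn : 0 ≤ c^2 * S1 - 1 := by
    rw [← hQ]
    exact Finset.sum_nonneg fun i _ => sq_nonneg _
  have key : M^2 < c^2 * S * S1 := by
    have h1 : M^2 ≤ (S - 1) * (c^2 * S1 - 1) := by
      rw [hM_split, ← hP, ← hQ]
      exact hCS
    linarith [h1, hSge, hQnn]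
  -- Goal 2
  have hd2 : d (m+2) = γ * M / A0 (m+1) := by
    rw [eq_div_iff hX.ne']
    linear_combination (-γ) * hMau - (d (m+2) * A0 (m+1)) * hγ2
  have hdm1 : d (m+1) = -(γ * S) / A0 (m+1) := by
    rw [eq_div_iff hX.ne']
    linear_combination γ * hSd - (d (m+1) * A0 (m+1)) * hγ2
  have hem : e m = γ * M / (A0 (m+1) * c) := by
    rw [eq_div_iff (mul_ne_zero hX.ne' hcpos.ne')]
    linear_combination (-γ) * hMua - (e m * (A0 (m+1) * c)) * hγ2
  have hem1 : e (m+1) = -(γ * c * S1) / A0 (m+1) := by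
    rw [eq_div_iff hX.ne']
    have hS1e' : c * S1 = -(A0 (m+1) * (e (m+1) * γ)) := by
      rw [hS1e, hXA]
      field_simp
    linear_combination γ * hS1e' - (e (m+1) * A0 (m+1)) * hγ2
  constructor
  · -- first goal
    show d (m+2) = (α (((m+2:ℕ) : ℤ) - 1) / α 0) * e (m+2-2)
    rw [show ((m+2:ℕ) : ℤ) - 1 = ((m+1 : ℕ) : ℤ) by push_cast; ring,
        show m+2-2 = m from rfl]
    rw [goal1, hceq, hA0_def]
  · -- second goal
    show d (m+1) * e (m+1) > d (m+2) * e (m+2-2)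
    rw [show m+2-2 = m from rfl]
    have hnum1 : -(γ * S) * -(γ * c * S1) = c * (S * S1) := by
      linear_combination S * c * S1 * hγ2
    have hnum2 : (γ * M) * (γ * M) = M * M := by
      linear_combination M * M * hγ2
    have hL : d (m+1) * e (m+1) = c * (S * S1) / (A0 (m+1) * A0 (m+1)) := by
      rw [hdm1, hem1, div_mul_div_comm, hnum1]
    have hR : d (m+2) * e m = M * M / (A0 (m+1) * (A0 (m+1) * c)) := by
      rw [hd2, hem, div_mul_div_comm, hnum2]
    rw [gt_iff_lt, hL, hR, div_lt_div_iff₀ (mul_pos hX (mul_pos hX hcpos)) (mul_pos hX hX)]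
    calc M * M * (A0 (m+1) * A0 (m+1)) = M^2 * (A0 (m+1) * A0 (m+1)) := by ring
      _ < c^2 * S * S1 * (A0 (m+1) * A0 (m+1)) :=
          mul_lt_mul_of_pos_right key (mul_pos hX hX)
      _ = c * (S * S1) * (A0 (m+1) * (A0 (m+1) * c)) := by ring
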